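/- Fix q ∈ ℝ and z₀ ∈ ℂ, and let H(z) := (q/(4π√2)) · (1 + z₀·conj z)/(z − z₀) for z ≠ z₀. Then for every z ∈ ℂ with z ≠ z₀, P(z)² · ∂̄( w ↦ P(w)^{-1} H(w) )(z) = −q/(8π). (This says the paper's electromagnetic memory solution (4.19) satisfies the Green's function equation P²∂̄(P⁻¹Δᴱᴹ) = (q/2)·δ_{S²}|_{ℓ≥1} away from the source point: away from z₀ it equals minus q/2 times the kernel 1/(4π) of the projection onto the ℓ = 0 spherical harmonic.) -/

import Mathlib

noncomputable section

/-- The Wirtinger derivative `∂̄f(z) = (1/2)(∂f/∂x + i ∂f/∂y)`. -/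
def dbar (f : ℂ → ℂ) (z : ℂ) : ℂ :=
  (1 / 2) * (deriv (fun t : ℝ => f (z + (t : ℂ))) 0
    + Complex.I * deriv (fun t : ℝ => f (z + (t : ℂ) * Complex.I)) 0)

/-- The conformal factor `P(z) = (1 + |z|²)/√2` of the round sphere metric in
stereographic coordinates. -/
def Pconf (z : ℂ) : ℝ := (1 + ‖z‖ ^ 2) / Real.sqrt 2

/-- The paper's electromagnetic memory Green's function (4.19):
`H(z) = (q/(4π√2)) (1 + z₀ z̄)/(z − z₀)`. -/
def memH (q : ℝ) (z₀ z : ℂ) : ℂ :=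
  ((q / (4 * Real.pi * Real.sqrt 2) : ℝ) : ℂ) *
    (1 + z₀ * (starRingEnd ℂ) z) / (z - z₀)

lemma dir_deriv (c z₀ z v : ℂ) (hs : (1 + z * (starRingEnd ℂ) z) ≠ 0) (hd : z - z₀ ≠ 0) :
    HasDerivAt (fun t : ℝ =>
        c * (1 + z₀ * ((starRingEnd ℂ) z + (t : ℂ) * (starRingEnd ℂ) v)) /
          ((1 + (z + (t : ℂ) * v) * ((starRingEnd ℂ) z + (t : ℂ) * (starRingEnd ℂ) v)) *
            ((z + (t : ℂ) * v) - z₀)))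
      ((c * (z₀ * (starRingEnd ℂ) v) * ((1 + z * (starRingEnd ℂ) z) * (z - z₀))
        - c * (1 + z₀ * (starRingEnd ℂ) z) *
          ((v * (starRingEnd ℂ) z + z * (starRingEnd ℂ) v) * (z - z₀)
            + (1 + z * (starRingEnd ℂ) z) * v))
        / ((1 + z * (starRingEnd ℂ) z) * (z - z₀)) ^ 2) 0 := by
  have ha : HasDerivAt (fun t : ℂ => z + t * v) v 0 :=
    ((hasDerivAt_id (0 : ℂ)).mul_const v).const_add z |>.congr_deriv (by ring)
  have hb : HasDerivAt (fun t : ℂ => (starRingEnd ℂ) z + t * (starRingEnd ℂ) v)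
      ((starRingEnd ℂ) v) 0 :=
    ((hasDerivAt_id (0 : ℂ)).mul_const _).const_add _ |>.congr_deriv (by ring)
  have hnum : HasDerivAt (fun t : ℂ =>
      c * (1 + z₀ * ((starRingEnd ℂ) z + t * (starRingEnd ℂ) v)))
      (c * (z₀ * (starRingEnd ℂ) v)) 0 :=
    ((hb.const_mul z₀).const_add 1).const_mul c
  have hden : HasDerivAt (fun t : ℂ =>
      (1 + (z + t * v) * ((starRingEnd ℂ) z + t * (starRingEnd ℂ) v)) * ((z + t * v) - z₀))
      ((v * (starRingEnd ℂ) z + z * (starRingEnd ℂ) v) * (z - z₀)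
        + (1 + z * (starRingEnd ℂ) z) * v) 0 := by
    have h1 : HasDerivAt (fun t : ℂ =>
        1 + (z + t * v) * ((starRingEnd ℂ) z + t * (starRingEnd ℂ) v))
        (v * (starRingEnd ℂ) z + z * (starRingEnd ℂ) v) 0 := by
      have := (ha.mul hb).const_add 1
      exact this.congr_deriv (by ring)
    have h2 : HasDerivAt (fun t : ℂ => (z + t * v) - z₀) v 0 := ha.sub_const z₀
    have := h1.mul h2
    exact this.congr_deriv (by ring)
  have hden0 : ((1 + (z + (0:ℂ) * v) * ((starRingEnd ℂ) z + (0:ℂ) * (starRingEnd ℂ) v)) *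
      ((z + (0:ℂ) * v) - z₀)) ≠ 0 := by
    simpa using mul_ne_zero hs hd
  have := (hnum.div hden hden0).comp_ofReal
  convert this using 2 <;> simp

lemma dbar_g (c z₀ z : ℂ) (hs : (1 + z * (starRingEnd ℂ) z) ≠ 0) (hd : z - z₀ ≠ 0) :
    dbar (fun w => c * (1 + z₀ * (starRingEnd ℂ) w) /
        ((1 + w * (starRingEnd ℂ) w) * (w - z₀))) z
      = -c / (1 + z * (starRingEnd ℂ) z) ^ 2 := by
  have h1 := (dir_deriv c z₀ z 1 hs hd).deriv
  have h2 := (dir_deriv c z₀ z Complex.I hs hd).deriv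
  rw [dbar]
  rw [show (fun t : ℝ => c * (1 + z₀ * (starRingEnd ℂ) (z + (t:ℂ))) /
        ((1 + (z + (t:ℂ)) * (starRingEnd ℂ) (z + (t:ℂ))) * ((z + (t:ℂ)) - z₀)))
      = (fun t : ℝ =>
        c * (1 + z₀ * ((starRingEnd ℂ) z + (t : ℂ) * (starRingEnd ℂ) 1)) /
          ((1 + (z + (t : ℂ) * 1) * ((starRingEnd ℂ) z + (t : ℂ) * (starRingEnd ℂ) 1)) *
            ((z + (t : ℂ) * 1) - z₀))) from by
    funext t; simp [Complex.conj_ofReal]]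
  rw [show (fun t : ℝ => c * (1 + z₀ * (starRingEnd ℂ) (z + (t:ℂ) * Complex.I)) /
        ((1 + (z + (t:ℂ) * Complex.I) * (starRingEnd ℂ) (z + (t:ℂ) * Complex.I)) *
          ((z + (t:ℂ) * Complex.I) - z₀)))
      = (fun t : ℝ =>
        c * (1 + z₀ * ((starRingEnd ℂ) z + (t : ℂ) * (starRingEnd ℂ) Complex.I)) /
          ((1 + (z + (t : ℂ) * Complex.I) *
              ((starRingEnd ℂ) z + (t : ℂ) * (starRingEnd ℂ) Complex.I)) *
            ((z + (t : ℂ) * Complex.I) - z₀))) from by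
    funext t; simp [Complex.conj_ofReal]]
  rw [h1, h2]
  have hsq : ((1 + z * (starRingEnd ℂ) z) * (z - z₀)) ^ 2 ≠ 0 :=
    pow_ne_zero 2 (mul_ne_zero hs hd)
  field_simp
  ring_nf
  simp [Complex.I_sq]
  linear_combination (c*z₀^2+c*z^2-2*c*z₀*z) * Complex.I_mul_I

/-- The electromagnetic memory solution (4.19) satisfies the Green's function
equation `P²∂̄(P⁻¹Δᴱᴹ) = (q/2) δ_{S²}|_{ℓ≥1}` away from the source point: for
`z ≠ z₀`, `P(z)² ∂̄(w ↦ P(w)⁻¹ H(w))(z) = −q/(8π)`. -/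
theorem memH_greens_equation_away_from_source
    (q : ℝ) (z₀ : ℂ) (z : ℂ) (hz : z ≠ z₀) :
    ((Pconf z : ℝ) : ℂ) ^ 2 *
      dbar (fun w => (((Pconf w : ℝ) : ℂ))⁻¹ * memH q z₀ w) z
    = -((q / (8 * Real.pi) : ℝ) : ℂ) := by
  set c : ℂ := ((q / (4 * Real.pi) : ℝ) : ℂ) with hc
  have hsqrt2 : Real.sqrt 2 ≠ 0 := by positivity
  have hpi : (Real.pi : ℝ) ≠ 0 := Real.pi_ne_zero
  have hsq2 : (Real.sqrt 2 : ℝ) ^ 2 = 2 := Real.sq_sqrt (by norm_num)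
  have hmc : ∀ w : ℂ, (1 : ℂ) + w * (starRingEnd ℂ) w
      = ((1 + ‖w‖ ^ 2 : ℝ) : ℂ) := by
    intro w
    rw [Complex.mul_conj]
    push_cast [Complex.sq_norm]
    ring
  have hwpos : ∀ w : ℂ, (0:ℝ) < 1 + ‖w‖ ^ 2 := by intro w; positivity
  have key : (fun w => (((Pconf w : ℝ) : ℂ))⁻¹ * memH q z₀ w)
      = fun w => c * (1 + z₀ * (starRingEnd ℂ) w) /
          ((1 + w * (starRingEnd ℂ) w) * (w - z₀)) := by
    funext w
    by_cases hw : w = z₀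
    · simp [hw, memH, sub_self]
    · have hd : w - z₀ ≠ 0 := sub_ne_zero.mpr hw
      have hs : (1 : ℂ) + w * (starRingEnd ℂ) w ≠ 0 := by
        rw [hmc w]
        exact_mod_cast (hwpos w).ne'
      have hP : ((Pconf w : ℝ) : ℂ) ≠ 0 := by
        rw [Pconf]
        push_cast
        exact div_ne_zero (by exact_mod_cast (hwpos w).ne') (by exact_mod_cast hsqrt2)
      rw [memH, hc, Pconf, hmc w]
      have hreal : ((1 + ‖w‖ ^ 2) / Real.sqrt 2)⁻¹ * (q / (4 * Real.pi * Real.sqrt 2))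
          = q / (4 * Real.pi) * (1 + ‖w‖ ^ 2)⁻¹ := by
        field_simp
      have hsc : ((((1 + ‖w‖ ^ 2) / Real.sqrt 2 : ℝ) : ℂ))⁻¹ *
            (((q / (4 * Real.pi * Real.sqrt 2) : ℝ) : ℂ))
          = ((q / (4 * Real.pi) : ℝ) : ℂ) * ((((1 + ‖w‖ ^ 2) : ℝ) : ℂ))⁻¹ := by
        rw [← Complex.ofReal_inv, ← Complex.ofReal_mul, ← Complex.ofReal_inv,
          ← Complex.ofReal_mul, hreal]
      calc ((((1 + ‖w‖ ^ 2) / Real.sqrt 2 : ℝ) : ℂ))⁻¹ *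
            (((q / (4 * Real.pi * Real.sqrt 2) : ℝ) : ℂ) *
              (1 + z₀ * (starRingEnd ℂ) w) / (w - z₀))
          = ((((1 + ‖w‖ ^ 2) / Real.sqrt 2 : ℝ) : ℂ))⁻¹ *
              ((q / (4 * Real.pi * Real.sqrt 2) : ℝ) : ℂ) *
              ((1 + z₀ * (starRingEnd ℂ) w) / (w - z₀)) := by ring
        _ = ((q / (4 * Real.pi) : ℝ) : ℂ) * ((((1 + ‖w‖ ^ 2) : ℝ) : ℂ))⁻¹ *
              ((1 + z₀ * (starRingEnd ℂ) w) / (w - z₀)) := by rw [hsc]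
        _ = ((q / (4 * Real.pi) : ℝ) : ℂ) * (1 + z₀ * (starRingEnd ℂ) w) /
              ((((1 + ‖w‖ ^ 2) : ℝ) : ℂ) * (w - z₀)) := by
            have hs' : ((1 + ‖w‖ ^ 2 : ℝ) : ℂ) ≠ 0 := by
              exact_mod_cast (hwpos w).ne'
            field_simp
  rw [key]
  have hs : (1 : ℂ) + z * (starRingEnd ℂ) z ≠ 0 := by
    rw [hmc z]; exact_mod_cast (hwpos z).ne'
  have hd : z - z₀ ≠ 0 := sub_ne_zero.mpr hz
  rw [dbar_g c z₀ z hs hd, hmc z, hc, Pconf]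
  have hzz : ((1 + ‖z‖ ^ 2 : ℝ) : ℂ) ≠ 0 := by
    exact_mod_cast (hwpos z).ne'
  have hreal : ((1 + ‖z‖ ^ 2) / Real.sqrt 2) ^ 2 *
      (-(q / (4 * Real.pi)) / (1 + ‖z‖ ^ 2) ^ 2) = -(q / (8 * Real.pi)) := by
    field_simp
    rw [hsq2]; ring
  calc ((((1 + ‖z‖ ^ 2) / Real.sqrt 2 : ℝ) : ℂ)) ^ 2 *
        (-((q / (4 * Real.pi) : ℝ) : ℂ) / (((1 + ‖z‖ ^ 2 : ℝ) : ℂ)) ^ 2)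
      = ((((1 + ‖z‖ ^ 2) / Real.sqrt 2) ^ 2 *
          (-(q / (4 * Real.pi)) / (1 + ‖z‖ ^ 2) ^ 2) : ℝ) : ℂ) := by push_cast; ring
    _ = -((q / (8 * Real.pi) : ℝ) : ℂ) := by rw [hreal]; push_cast; ring

end
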